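/- In a dendroidally ordered set A, if a₁ and a₂ are ≤_d-incomparable and both a₁ ≤_d b and a₂ ≤_d b, then there exists c ∈ A⁺ with a₁ and a₂ both occurring in c and c ≤ b. -/

import Mathlib

/-- A (commutative) broad poset: a set `A` with a relation between the free
commutative monoid on `A` (modelled as `Multiset A`) and `A`, satisfying
broad reflexivity, transitivity and antisymmetry. -/
structure BroadPoset (A : Type) where
  le : Multiset A → A → Prop
  le_refl : ∀ a : A, le {a} a
  le_trans : ∀ (a : A) (l : List (Multiset A × A)),
      le (↑(l.map Prod.snd) : Multiset A) a → (∀ p ∈ l, le p.1 p.2) →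
      le (l.map Prod.fst).sum a
  le_antisymm : ∀ a a' : A, le {a} a' → le {a'} a → a = a'

/-- The descendance relation: `b ≤_d a` iff `b` occurs in some `b' ≤ a`. -/
def BroadPoset.descLe {A : Type} (P : BroadPoset A) (b a : A) : Prop :=
  ∃ b' : Multiset A, P.le b' a ∧ b ∈ b'

/-- Strict broad inequality `b < a`. -/
def BroadPoset.blt {A : Type} (P : BroadPoset A) (b : Multiset A) (a : A) : Prop :=
  P.le b a ∧ b ≠ {a}

/-- The induced order on `A⁺`: `s ≤ t` iff `t = t₁·…·tₙ` and `s = s₁·…·sₙ`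
with `sᵢ ≤ tᵢ` for each `i`. -/
def BroadPoset.multLe {A : Type} (P : BroadPoset A) (s t : Multiset A) : Prop :=
  ∃ l : List (Multiset A × A), (↑(l.map Prod.snd) : Multiset A) = t ∧
    (l.map Prod.fst).sum = s ∧ ∀ p ∈ l, P.le p.1 p.2

/-- A leaf: an element with `ĥa = ∅`. -/
def BroadPoset.IsLeaf {A : Type} (P : BroadPoset A) (a : A) : Prop :=
  ∀ b : Multiset A, ¬ P.blt b a

/-- `u` is the maximum of `ĥa = {b | b < a}`, i.e. `u = a↑`; its members are
the children of `a`. -/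
def BroadPoset.IsChildSet {A : Type} (P : BroadPoset A) (a : A) (u : Multiset A) : Prop :=
  P.blt u a ∧ ∀ b : Multiset A, P.blt b a → P.multLe b u

/-- `r` is the root: every element is a descendant of `r` (extremum of `≤_d`). -/
def BroadPoset.IsRoot {A : Type} (P : BroadPoset A) (r : A) : Prop :=
  ∀ a : A, P.descLe a r

/-- Monotone functions between broad posets. -/
def IsMonotone {A B : Type} (P : BroadPoset A) (Q : BroadPoset B) (f : A → B) : Prop :=
  ∀ (b : Multiset A) (a : A), P.le b a → Q.le (b.map f) (f a)

/-- A link: `b < a` such that `b ≤ b' < a` implies `b = b'`. -/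
def BroadPoset.IsLink {A : Type} (P : BroadPoset A) (b : Multiset A) (a : A) : Prop :=
  P.blt b a ∧ ∀ b' : Multiset A, P.multLe b b' → P.blt b' a → b = b'

/-- A dendroidally ordered set: a finite broad poset which is simple, has a
root, and in which every non-leaf has children. -/
structure BroadPoset.IsDendroidal {A : Type} (P : BroadPoset A) : Prop where
  finite : Set.Finite {p : Multiset A × A | P.le p.1 p.2}
  simple : ∀ (b : Multiset A) (a : A), P.le b a → b.Nodup
  root : ∃ r : A, P.IsRoot r
  children : ∀ a : A, ¬ P.IsLeaf a → ∃ u : Multiset A, P.IsChildSet a u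

namespace BroadPoset

variable {A : Type} (P : BroadPoset A)

private lemma sum_singletons (L : List A) :
    (L.map (fun x => ({x} : Multiset A))).sum = (L : Multiset A) := by
  induction L with
  | nil => rfl
  | cons a L ih =>
    simp only [List.map_cons, List.sum_cons, ih]
    rw [← Multiset.cons_coe, ← Multiset.singleton_add]

lemma multLe_refl (t : Multiset A) : P.multLe t t := by
  refine ⟨t.toList.map (fun x => (({x} : Multiset A), x)), ?_, ?_, ?_⟩
  · have : (Prod.snd ∘ fun x => (({x} : Multiset A), x)) = id := rfl
    rw [List.map_map, this, List.map_id, Multiset.coe_toList]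
  · simp only [List.map_map]
    have : (Prod.fst ∘ fun x => (({x} : Multiset A), x)) = fun x => ({x} : Multiset A) := rfl
    rw [this, sum_singletons, Multiset.coe_toList]
  · intro p hp
    simp only [List.mem_map] at hp
    obtain ⟨x, -, rfl⟩ := hp
    exact P.le_refl x

lemma multLe_cons [DecidableEq A] {u c s : Multiset A} {b₁ : A} (hb : b₁ ∈ u)
    (hc : P.le c b₁) (hs : P.multLe s (u.erase b₁)) : P.multLe (c + s) u := by
  obtain ⟨l, hsnd, hfst, hle⟩ := hs
  refine ⟨(c, b₁) :: l, ?_, ?_, ?_⟩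
  · show ((b₁ :: l.map Prod.snd : List A) : Multiset A) = u
    rw [show ((b₁ :: l.map Prod.snd : List A) : Multiset A) = b₁ ::ₘ (l.map Prod.snd : List (_)) from rfl, hsnd, Multiset.cons_erase hb]
  · simp [hfst]
  · intro p hp
    rcases List.mem_cons.mp hp with rfl | hp
    · exact hc
    · exact hle p hp

lemma multLe_le {s u : Multiset A} {b : A} (h : P.multLe s u) (hu : P.le u b) :
    P.le s b := by
  obtain ⟨l, hsnd, hfst, hle⟩ := h
  have := P.le_trans b l (by rw [hsnd]; exact hu) hle
  rwa [hfst] at this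

private lemma mem_fst_of_mem_sum {a : A} {l : List (Multiset A × A)}
    (ha : a ∈ (l.map Prod.fst).sum) : ∃ p ∈ l, a ∈ p.1 := by
  induction l with
  | nil => simp at ha
  | cons p l ih =>
    simp only [List.map_cons, List.sum_cons, Multiset.mem_add] at ha
    rcases ha with h | h
    · exact ⟨p, List.mem_cons_self, h⟩
    · obtain ⟨q, hq, hq2⟩ := ih h
      exact ⟨q, List.mem_cons_of_mem _ hq, hq2⟩

lemma eq_singleton_of_mem (hP : P.IsDendroidal) {c : Multiset A} {b : A}
    (hc : P.le c b) (hb : b ∈ c) : c = {b} := by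
  classical
  by_contra hne
  have hd : c.erase b ≠ 0 := by
    intro h0
    have := Multiset.cons_erase hb
    rw [h0] at this
    exact hne this.symm
  have h2 : P.le (c + c.erase b) b :=
    P.multLe_le (P.multLe_cons hb hc (P.multLe_refl _)) hc
  have hnd := hP.simple _ _ h2
  rw [Multiset.nodup_add] at hnd
  obtain ⟨x, hx⟩ := Multiset.exists_mem_of_ne_zero hd
  exact Multiset.disjoint_left.mp hnd.2.2 (Multiset.mem_of_mem_erase hx) hx

lemma descLe_trans {a x y : A} (h1 : P.descLe a x) (h2 : P.descLe x y) :
    P.descLe a y := by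
  classical
  obtain ⟨c, hc, hac⟩ := h1
  obtain ⟨c', hc', hxc'⟩ := h2
  exact ⟨c + c'.erase x, P.multLe_le (P.multLe_cons hxc' hc (P.multLe_refl _)) hc',
    Multiset.mem_add.mpr (Or.inl hac)⟩

lemma descLe_antisymm (hP : P.IsDendroidal) {a b : A}
    (h1 : P.descLe a b) (h2 : P.descLe b a) : a = b := by
  classical
  obtain ⟨c, hc, hac⟩ := h1
  obtain ⟨c', hc', hbc'⟩ := h2
  have hle : P.le (c' + c.erase a) b :=
    P.multLe_le (P.multLe_cons hac hc' (P.multLe_refl _)) hc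
  have heq : c' + c.erase a = {b} :=
    P.eq_singleton_of_mem hP hle (Multiset.mem_add.mpr (Or.inl hbc'))
  have hcard := congrArg Multiset.card heq
  simp only [Multiset.card_add, Multiset.card_singleton] at hcard
  have hc'pos : 0 < Multiset.card c' := Multiset.card_pos_iff_exists_mem.mpr ⟨b, hbc'⟩
  have h0 : c.erase a = 0 := Multiset.card_eq_zero.mp (by omega)
  rw [h0, add_zero] at heq
  have hca : c = {a} := by
    have := Multiset.cons_erase hac
    rw [h0] at this
    exact this.symm
  exact P.le_antisymm a b (hca ▸ hc) (heq ▸ hc')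

lemma finiteA (hP : P.IsDendroidal) : Finite A := by
  have : Finite {p : Multiset A × A // P.le p.1 p.2} := hP.finite.to_subtype
  exact Finite.of_injective
    (fun a => (⟨({a}, a), P.le_refl a⟩ : {p : Multiset A × A // P.le p.1 p.2}))
    (fun a b h => by simpa using congrArg (fun p => p.1.2) h)

end BroadPoset

/-- In a dendroidally ordered set, two `≤_d`-incomparable common descendants
of `b` occur together in a single `c ∈ A⁺` with `c ≤ b`. -/
theorem incomparable_common_tuple {A : Type} (P : BroadPoset A) (hP : P.IsDendroidal)
    (a₁ a₂ b : A) (h₁ : ¬ P.descLe a₁ a₂) (h₂ : ¬ P.descLe a₂ a₁)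
    (hb₁ : P.descLe a₁ b) (hb₂ : P.descLe a₂ b) :
    ∃ c : Multiset A, a₁ ∈ c ∧ a₂ ∈ c ∧ P.le c b := by
  classical
  have hF : Finite A := P.finiteA hP
  let r : A → A → Prop := fun x y => P.descLe x y ∧ x ≠ y
  have htrans : IsTrans A r := by
    constructor
    rintro x y z ⟨hxy, hxy'⟩ ⟨hyz, hyz'⟩
    refine ⟨P.descLe_trans hxy hyz, ?_⟩
    rintro rfl
    exact hxy' (P.descLe_antisymm hP hxy hyz)
  have hirr : IsIrrefl A r := ⟨fun x hx => hx.2 rfl⟩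
  have hwf : WellFounded r := Finite.wellFounded_of_trans_of_irrefl r
  refine hwf.induction (C := fun b => P.descLe a₁ b → P.descLe a₂ b →
      ∃ c : Multiset A, a₁ ∈ c ∧ a₂ ∈ c ∧ P.le c b) b ?_ hb₁ hb₂
  clear hb₁ hb₂
  intro b IH hb₁ hb₂
  obtain ⟨c₁, hc₁, ha₁c₁⟩ := hb₁
  obtain ⟨c₂, hc₂, ha₂c₂⟩ := hb₂
  -- a₁ ≠ b and a₂ ≠ b
  have ha₁b : a₁ ≠ b := by
    rintro rfl
    exact h₂ ⟨c₂, hc₂, ha₂c₂⟩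
  have ha₂b : a₂ ≠ b := by
    rintro rfl
    exact h₁ ⟨c₁, hc₁, ha₁c₁⟩
  have hblt₁ : P.blt c₁ b := ⟨hc₁, fun h => ha₁b (by rw [h] at ha₁c₁; exact Multiset.mem_singleton.mp ha₁c₁)⟩
  have hblt₂ : P.blt c₂ b := ⟨hc₂, fun h => ha₂b (by rw [h] at ha₂c₂; exact Multiset.mem_singleton.mp ha₂c₂)⟩
  have hnl : ¬ P.IsLeaf b := fun hl => hl c₁ hblt₁
  obtain ⟨u, hu⟩ := hP.children b hnl
  have hbu : b ∉ u := fun hbu => hu.1.2 (P.eq_singleton_of_mem hP hu.1.1 hbu)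
  -- find children b₁, b₂ of b with a₁ ≤_d b₁, a₂ ≤_d b₂
  obtain ⟨l₁, hsnd₁, hfst₁, hle₁⟩ := hu.2 c₁ hblt₁
  obtain ⟨l₂, hsnd₂, hfst₂, hle₂⟩ := hu.2 c₂ hblt₂
  obtain ⟨p₁, hp₁l, hp₁⟩ := BroadPoset.mem_fst_of_mem_sum (hfst₁ ▸ ha₁c₁)
  obtain ⟨p₂, hp₂l, hp₂⟩ := BroadPoset.mem_fst_of_mem_sum (hfst₂ ▸ ha₂c₂)
  have hb₁u : p₁.2 ∈ u := by
    rw [← hsnd₁]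
    exact Multiset.mem_coe.mpr (List.mem_map.mpr ⟨p₁, hp₁l, rfl⟩)
  have hb₂u : p₂.2 ∈ u := by
    rw [← hsnd₂]
    exact Multiset.mem_coe.mpr (List.mem_map.mpr ⟨p₂, hp₂l, rfl⟩)
  have hd₁ : P.le p₁.1 p₁.2 := hle₁ p₁ hp₁l
  have hd₂ : P.le p₂.1 p₂.2 := hle₂ p₂ hp₂l
  by_cases hcase : p₁.2 = p₂.2
  · -- both below the same child: apply the induction hypothesis
    have hrb : r p₁.2 b := ⟨⟨u, hu.1.1, hb₁u⟩, fun h => hbu (h ▸ hb₁u)⟩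
    obtain ⟨c, hac, hac', hcle⟩ := IH p₁.2 hrb ⟨p₁.1, hd₁, hp₁⟩ ⟨p₂.1, hcase ▸ hd₂, hp₂⟩
    refine ⟨c + u.erase p₁.2, Multiset.mem_add.mpr (Or.inl hac),
      Multiset.mem_add.mpr (Or.inl hac'), ?_⟩
    exact P.multLe_le (P.multLe_cons hb₁u hcle (P.multLe_refl _)) hu.1.1
  · -- distinct children: combine the two tuples
    have hb₂u' : p₂.2 ∈ u.erase p₁.2 :=
      (Multiset.mem_erase_of_ne (fun h => hcase h.symm)).mpr hb₂u
    have hm : P.multLe (p₁.1 + (p₂.1 + ((u.erase p₁.2).erase p₂.2))) u :=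
      P.multLe_cons hb₁u hd₁ (P.multLe_cons hb₂u' hd₂ (P.multLe_refl _))
    refine ⟨_, Multiset.mem_add.mpr (Or.inl hp₁),
      Multiset.mem_add.mpr (Or.inr (Multiset.mem_add.mpr (Or.inl hp₂))),
      P.multLe_le hm hu.1.1⟩
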